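/- arXiv:0803.3222 — 2 statements merged into one kernel-verified Lean document; each statement's English description precedes it below -/
import Mathlib

section
/- Let p be an odd prime and G a finite p-group. Suppose x, g ∈ G and H is an abelian normal subgroup of index p containing x, with y = [x, g⁻¹] ∈ H and z = [y, g⁻¹] ∈ Z(G), and g⁻ᵖ centralizes x. If X = ⟨Z(G), x, y⟩ is abelian, then for every integer j ≥ 0: z^{g^{-j}} = z, y^{g^{-j}} = y·z^j, and x^{g^{-j}} = x·y^j·z^{C(j,2)}, and moreover y^p = z^p = 1. -/
noncomputable section

def IsChar (G : Type) [Group G] (χ : G → ℂ) : Prop :=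
  ∃ V : FDRep ℂ G, ∀ g, χ g = FDRep.character V g

def IsIrrChar (G : Type) [Group G] (χ : G → ℂ) : Prop :=
  ∃ V : FDRep ℂ G, CategoryTheory.Simple V ∧ ∀ g, χ g = FDRep.character V g

def IsLinChar (G : Type) [Group G] (χ : G → ℂ) : Prop :=
  IsIrrChar G χ ∧ χ 1 = 1

def IsConstituent (G : Type) [Group G] (θ Θ : G → ℂ) : Prop :=
  ∃ (c : ℕ) (Θ' : G → ℂ), 0 < c ∧ (IsChar G Θ' ∨ Θ' = 0) ∧ Θ = (c : ℂ) • θ + Θ'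

open Classical in
def ind {G : Type} [Group G] [Fintype G] (H : Subgroup G) (ξ : H → ℂ) : G → ℂ :=
  fun g => (Nat.card H : ℂ)⁻¹ * ∑ x : G, if h : x * g * x⁻¹ ∈ H then ξ ⟨x * g * x⁻¹, h⟩ else 0

def conjChar {G : Type} [Group G] (χ : G → ℂ) : G → ℂ := fun g => starRingEnd ℂ (χ g)

theorem stmt10 (p : ℕ) (hp : p.Prime) (hodd : Odd p) {G : Type} [Group G] [Fintype G]
    (hG : IsPGroup p G) (H : Subgroup G) [H.Normal] (hidx : H.index = p)
    (habel : ∀ a b : ↥H, a * b = b * a)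
    (x g y z : G) (hx : x ∈ H)
    (hy : y = x⁻¹ * g * x * g⁻¹) (hyH : y ∈ H)
    (hz : z = y⁻¹ * g * y * g⁻¹) (hzZ : z ∈ Subgroup.center G)
    (hgp : Commute (g⁻¹ ^ p) x)
    (hXab : ∀ a ∈ Subgroup.closure ((Subgroup.center G : Set G) ∪ {x, y}),
            ∀ b ∈ Subgroup.closure ((Subgroup.center G : Set G) ∪ {x, y}), a * b = b * a) :
    (∀ j : ℕ, g ^ j * z * g⁻¹ ^ j = z ∧ g ^ j * y * g⁻¹ ^ j = y * z ^ j ∧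
      g ^ j * x * g⁻¹ ^ j = x * y ^ j * z ^ (j.choose 2)) ∧
    y ^ p = 1 ∧ z ^ p = 1 := by
  have hzc : ∀ a : G, Commute z a := fun a => (Subgroup.mem_center_iff.mp hzZ a).symm
  have hxy : Commute x y :=
    hXab x (Subgroup.subset_closure (Or.inr (Or.inl rfl)))
         y (Subgroup.subset_closure (Or.inr (Or.inr rfl)))
  have gx : g * x * g⁻¹ = x * y := by rw [hy]; group
  have gy : g * y * g⁻¹ = y * z := by rw [hz]; group
  have hzconj : ∀ n : ℕ, g * z ^ n * g⁻¹ = z ^ n := by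
    intro n
    rw [((hzc g).symm.pow_right n).eq, mul_assoc, mul_inv_cancel, mul_one]
  have key : ∀ j : ℕ, g ^ j * z * g⁻¹ ^ j = z ∧ g ^ j * y * g⁻¹ ^ j = y * z ^ j ∧
      g ^ j * x * g⁻¹ ^ j = x * y ^ j * z ^ (j.choose 2) := by
    intro j
    induction j with
    | zero => simp
    | succ j ih =>
      obtain ⟨ihz, ihy, ihx⟩ := ih
      have hgsucc : ∀ a : G, g ^ (j+1) * a * g⁻¹ ^ (j+1) = g * (g ^ j * a * g⁻¹ ^ j) * g⁻¹ := by
        intro a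
        rw [pow_succ' g, pow_succ g⁻¹]
        group
      refine ⟨?_, ?_, ?_⟩
      · rw [hgsucc, ihz, (hzc g).symm.eq, mul_assoc, mul_inv_cancel, mul_one]
      · rw [hgsucc, ihy]
        have h0 : g * (y * z ^ j) * g⁻¹ = (g * y * g⁻¹) * (g * z ^ j * g⁻¹) := by group
        rw [h0, gy, hzconj]
        calc y * z * z ^ j = y * (z * z ^ j) := by rw [mul_assoc]
          _ = y * z ^ (j + 1) := by rw [← pow_succ']
      · rw [hgsucc, ihx]
        have h1 : g * (x * y ^ j * z ^ (j.choose 2)) * g⁻¹ =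
            (g * x * g⁻¹) * (g * y ^ j * g⁻¹) * (g * z ^ (j.choose 2) * g⁻¹) := by group
        have h2 : g * y ^ j * g⁻¹ = (g * y * g⁻¹) ^ j := by rw [conj_pow]
        have h3 : (y * z) ^ j = y ^ j * z ^ j := (hzc y).symm.mul_pow j
        have h4 : (j+1).choose 2 = j.choose 2 + j := by
          rw [Nat.choose_succ_succ, Nat.choose_one_right, Nat.add_comm]
        rw [h1, gx, h2, gy, hzconj, h3, h4]
        calc x * y * (y ^ j * z ^ j) * z ^ (j.choose 2)
            = x * (y * y ^ j) * (z ^ j * z ^ (j.choose 2)) := by group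
          _ = x * y ^ (j + 1) * z ^ (j.choose 2 + j) := by
              rw [← pow_succ', ← pow_add, Nat.add_comm j (j.choose 2)]
  have hcx : Commute (g ^ p) x := Commute.inv_left_iff.mp (by rwa [inv_pow] at hgp)
  have hg1 : Commute (g ^ p) g := (Commute.refl g).pow_left p
  have hcy : Commute (g ^ p) y := by
    rw [hy]
    exact ((hcx.inv_right.mul_right hg1).mul_right hcx).mul_right hg1.inv_right
  have hxconj : g ^ p * x * g⁻¹ ^ p = x := by
    rw [inv_pow, hcx.eq, mul_assoc, mul_inv_cancel, mul_one]
  have hyconj : g ^ p * y * g⁻¹ ^ p = y := by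
    rw [inv_pow, hcy.eq, mul_assoc, mul_inv_cancel, mul_one]
  obtain ⟨-, kyp, kxp⟩ := key p
  have hzp : z ^ p = 1 := by
    have h : y * z ^ p = y * 1 := by rw [← kyp, hyconj, mul_one]
    exact mul_left_cancel h
  obtain ⟨m, hm⟩ := hodd
  have hp2 : 2 < p := by have := hp.two_le; omega
  obtain ⟨k, hk⟩ : p ∣ p.choose 2 := hp.dvd_choose_self (by norm_num) hp2
  have hzC : z ^ (p.choose 2) = 1 := by rw [hk, pow_mul, hzp, one_pow]
  have hyp : y ^ p = 1 := by
    have h5 : x * y ^ p * z ^ (p.choose 2) = x := by rw [← kxp, hxconj]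
    rw [hzC, mul_one] at h5
    have h6 : x * y ^ p = x * 1 := by rw [h5, mul_one]
    exact mul_left_cancel h6
  exact ⟨key, hyp, hzp⟩
end
end

section
/- Let G be a finite p-group, χ, ψ ∈ Irr(G) of degree p with Ker(χ) ∩ Ker(ψ) = 1, H an abelian normal subgroup of index p with χ = ξ^G, ψ = τ^G for ξ, τ ∈ Lin(H), Z = Z(G) = Z(χ) = Z(ψ), and Y/Z a chief factor of G with Y ≤ H. If the linear character ξ_Y·τ_Y of Y is G-invariant, then the restriction (χψ)_Y has exactly p distinct irreducible (linear) constituents, each with multiplicity p: (χψ)_Y = p·Σⱼ₌₁ᵖ ξ_Y·(τⱼ)_Y. -/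
noncomputable section

open CategoryTheory Module

lemma fdRep_mono_injective {G : Type} [Group G] {W X : FDRep ℂ G} (f : W ⟶ X) [Mono f] :
    Function.Injective f.hom := by
  have h2 : Mono ((forget₂ (FGModuleCat ℂ) (ModuleCat ℂ)).map
      ((Action.forget (FGModuleCat ℂ) (MonCat.of G)).map f)) := inferInstance
  exact (ModuleCat.mono_iff_injective _).1 h2

lemma simple_of_finrank_one {G : Type} [Group G] (X : FDRep ℂ G) (h : finrank ℂ X = 1) :
    Simple X := by
  have h' : finrank ℂ ↑X.V.obj = 1 := h
  constructor
  intro W f hMono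
  constructor
  · intro hIso h0
    subst h0
    have hid : 𝟙 X = (0 : X ⟶ X) := by
      rw [← IsIso.inv_hom_id (0 : W ⟶ X)]
      exact (Limits.comp_zero (f := inv (0 : W ⟶ X))).symm
    have hnt : Nontrivial X := by
      have hpos : 0 < finrank ℂ X := by omega
      exact Module.nontrivial_of_finrank_pos hpos
    obtain ⟨x, y, hxy⟩ := exists_pair_ne X
    apply hxy
    have hx : x = (𝟙 X : X ⟶ X).hom x := rfl
    have hy : y = (𝟙 X : X ⟶ X).hom y := rfl
    rw [hx, hy, hid]
    show (0 : X →ₗ[ℂ] X) x = (0 : X →ₗ[ℂ] X) y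
    simp
  · intro hne
    have hfh : (f.hom.hom.hom : ↑W.V.obj →ₗ[ℂ] ↑X.V.obj) ≠ 0 := by
      intro h0
      exact hne (Action.hom_ext _ _ (FGModuleCat.hom_ext h0))
    have hinj : Function.Injective (f.hom.hom.hom : ↑W.V.obj →ₗ[ℂ] ↑X.V.obj) := fdRep_mono_injective f
    have hsurj : Function.Surjective (f.hom.hom.hom : ↑W.V.obj →ₗ[ℂ] ↑X.V.obj) := by
      have h1 : LinearMap.range (f.hom.hom.hom : ↑W.V.obj →ₗ[ℂ] ↑X.V.obj) ≠ ⊥ := by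
        intro hb
        exact hfh (LinearMap.range_eq_bot.mp hb)
      have h2 : 0 < finrank ℂ (LinearMap.range (f.hom.hom.hom : ↑W.V.obj →ₗ[ℂ] ↑X.V.obj)) := by
        rw [Module.finrank_pos_iff]
        exact Submodule.nontrivial_iff_ne_bot.2 h1
      have h3 : finrank ℂ (LinearMap.range (f.hom.hom.hom : ↑W.V.obj →ₗ[ℂ] ↑X.V.obj))
          = finrank ℂ ↑X.V.obj := by
        have h4 : finrank ℂ (LinearMap.range (f.hom.hom.hom : ↑W.V.obj →ₗ[ℂ] ↑X.V.obj))
            ≤ finrank ℂ ↑X.V.obj := Submodule.finrank_le _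
        omega
      rw [← LinearMap.range_eq_top]
      exact Submodule.eq_top_of_finrank_eq h3
    let e := LinearEquiv.ofBijective (f.hom.hom.hom : ↑W.V.obj →ₗ[ℂ] ↑X.V.obj) ⟨hinj, hsurj⟩
    have hfe : ∀ w : ↑W.V.obj, e w = f.hom w := fun w => rfl
    refine ⟨⟨⟨⟨ModuleCat.ofHom (e.symm : ↑X.V.obj →ₗ[ℂ] ↑W.V.obj)⟩, ?_⟩, ?_, ?_⟩⟩
    · intro g
      ext x
      show e.symm ((X.ρ g) x) = (W.ρ g) (e.symm x)
      apply hinj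
      have h4 : ∀ w : ↑W.V.obj, f.hom ((W.ρ g) w) = (X.ρ g) (f.hom w) := by
        intro w
        exact congrFun (congrArg (fun (m : W.V ⟶ X.V) => (m : ↑W.V.obj → ↑X.V.obj)) (f.comm g)) w
      have l1 : f.hom (e.symm ((X.ρ g) x)) = (X.ρ g) x := by rw [← hfe, e.apply_symm_apply]
      have l2 : f.hom ((W.ρ g) (e.symm x)) = (X.ρ g) x := by rw [h4, ← hfe, e.apply_symm_apply]
      exact l1.trans l2.symm
    · apply Action.hom_ext
      ext w
      show e.symm (f.hom w) = w
      rw [← hfe, e.symm_apply_apply]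
    · apply Action.hom_ext
      ext x
      show f.hom (e.symm x) = x
      rw [← hfe, e.apply_symm_apply]



def scalarRep {G : Type} [Group G] (m : G →* ℂ) : Representation ℂ G ℂ where
  toFun g := m g • LinearMap.id
  map_one' := by
    show m 1 • LinearMap.id = 1
    rw [map_one, one_smul]; rfl
  map_mul' g h := by
    show m (g * h) • LinearMap.id = (m g • LinearMap.id) * (m h • LinearMap.id)
    rw [map_mul, smul_mul_smul_comm]
    congr 1

lemma isLinChar_of_monoidHom {G : Type} [Group G] (m : G →* ℂ) : IsLinChar G ⇑m := by
  refine ⟨⟨FDRep.of (scalarRep m), ?_, ?_⟩, m.map_one⟩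
  · exact simple_of_finrank_one _ (by exact Module.finrank_self ℂ)
  · intro g
    show m g = LinearMap.trace ℂ ℂ ((scalarRep m) g)
    show m g = LinearMap.trace ℂ ℂ (m g • LinearMap.id)
    rw [map_smul, LinearMap.trace_id]
    simp

lemma trace_mul_of_finrank_one {M : Type} [AddCommGroup M] [Module ℂ M] [FiniteDimensional ℂ M]
    (h : finrank ℂ M = 1) (f g : M →ₗ[ℂ] M) :
    LinearMap.trace ℂ M (f * g) = LinearMap.trace ℂ M f * LinearMap.trace ℂ M g := by
  let b : Basis (Fin 1) ℂ M := finBasisOfFinrankEq ℂ M h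
  rw [LinearMap.trace_eq_matrix_trace ℂ b, LinearMap.trace_eq_matrix_trace ℂ b,
    LinearMap.trace_eq_matrix_trace ℂ b]
  have : f * g = f ∘ₗ g := rfl
  rw [this, LinearMap.toMatrix_comp b b b]
  simp [Matrix.trace, Matrix.mul_apply, Fin.sum_univ_one]

lemma mul_of_isLinChar {G : Type} [Group G] {χ : G → ℂ} (h : IsLinChar G χ) (a b : G) :
    χ (a * b) = χ a * χ b := by
  obtain ⟨⟨V, hs, hc⟩, h1⟩ := h
  have hr : finrank ℂ V = 1 := by
    have := hc 1
    rw [h1, FDRep.char_one] at this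
    exact_mod_cast this.symm
  rw [hc (a*b), hc a, hc b]
  show LinearMap.trace ℂ V (V.ρ (a*b)) = _
  rw [map_mul]
  exact trace_mul_of_finrank_one hr _ _

lemma hom_ne_zero {G : Type} [Group G] (m : G →* ℂ) (g : G) : m g ≠ 0 := by
  intro h0
  have : m g * m g⁻¹ = 1 := by rw [← map_mul, mul_inv_cancel, map_one]
  rw [h0, zero_mul] at this
  exact zero_ne_one this

lemma hom_abs_one {G : Type} [Group G] [Finite G] (m : G →* ℂ) (g : G) :
    ‖m g‖ = 1 := by
  have h : (m g) ^ (orderOf g) = 1 := by rw [← map_pow, pow_orderOf_eq_one, map_one]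
  have h2 : (‖m g‖) ^ (orderOf g) = 1 := by
    rw [← norm_pow, h, norm_one]
  have h3 : orderOf g ≠ 0 := (orderOf_pos g).ne'
  rcases (pow_eq_one_iff_cases.mp h2) with h4 | h4 | h4
  · exact absurd h4 h3
  · exact h4
  · exfalso
    have := norm_nonneg (m g)
    rw [h4.1] at this
    linarith

lemma geom_aux (p : ℕ) (α β : ℂ) (h : α * β = 1) (hβp : β ^ p = 1) :
    (∑ i : Fin p, α ^ (i : ℕ)) * (∑ j : Fin p, β ^ (j : ℕ)) =
      (p : ℂ) * ∑ j : Fin p, β ^ (j : ℕ) := by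
  by_cases hβ : β = 1
  · have hα : α = 1 := by rw [hβ, mul_one] at h; exact h
    simp [hα, hβ]
  · have h0 : (∑ j : Fin p, β ^ (j : ℕ)) = 0 := by
      rw [Fin.sum_univ_eq_sum_range, geom_sum_eq hβ, hβp]
      simp
    rw [h0, mul_zero, mul_zero]


lemma le_center_of_card_p (p : ℕ) (hp : p.Prime) {Q : Type} [Group Q] [Finite Q]
    (hQ : IsPGroup p Q) (N : Subgroup Q) (hN : N.Normal) (hcard : Nat.card N = p) :
    N ≤ Subgroup.center Q := by
  haveI := hN
  haveI : Fact p.Prime := ⟨hp⟩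
  letI : MulAction Q ↥N := MulAction.compHom _ (MulAut.conjNormal (G := Q) (H := N))
  have hsmul : ∀ (q : Q) (n : ↥N), q • n = MulAut.conjNormal q n := fun _ _ => rfl
  have hmod := hQ.card_modEq_card_fixedPoints (↥N)
  set s := MulAction.fixedPoints Q ↥N with hs
  have h1 : (1 : ↥N) ∈ s := by
    intro q
    rw [hsmul]
    exact map_one _
  haveI : Nonempty s := ⟨⟨1, h1⟩⟩
  have hk_pos : 0 < Nat.card s := Nat.card_pos
  have hk_le : Nat.card s ≤ p :=
    hcard ▸ Nat.card_le_card_of_injective _ (Subtype.val_injective (p := fun n => n ∈ s))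
  have hdvd : p ∣ Nat.card s := by
    have h2 : Nat.card ↥N ≡ Nat.card s [MOD p] := hmod
    rw [hcard] at h2
    have h3 : Nat.card s ≡ 0 [MOD p] := h2.symm.trans (Nat.modEq_zero_iff_dvd.2 dvd_rfl)
    exact Nat.modEq_zero_iff_dvd.1 h3
  have hkp : Nat.card s = p := le_antisymm hk_le (Nat.le_of_dvd hk_pos hdvd)
  have hsuniv : s = Set.univ := by
    apply Set.eq_of_subset_of_ncard_le (Set.subset_univ s)
    rw [Set.ncard_univ, ← Nat.card_coe_set_eq, hkp, hcard]
  intro n hn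
  rw [Subgroup.mem_center_iff]
  intro q
  have hmem : (⟨n, hn⟩ : ↥N) ∈ s := hsuniv ▸ Set.mem_univ _
  have h2 := hmem q
  rw [hsmul] at h2
  have h3 := congrArg Subtype.val h2
  rw [MulAut.conjNormal_apply] at h3
  calc q * n = q * n * q⁻¹ * q := by group
  _ = n * q := by rw [h3]

lemma commutator_mem_center (p : ℕ) (hp : p.Prime) {G : Type} [Group G] [Finite G]
    (hG : IsPGroup p G) (Y : Subgroup G) (hYnorm : Y.Normal)
    (hZY : Subgroup.center G ≤ Y)
    (hYcard : Nat.card ↥Y = p * Nat.card ↥(Subgroup.center G)) :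
    ∀ g y : G, y ∈ Y → g * y * g⁻¹ * y⁻¹ ∈ Subgroup.center G := by
  set Z := Subgroup.center G with hZ
  let π := QuotientGroup.mk' Z
  let f := π.comp Y.subtype
  have hker : f.ker = Z.subgroupOf Y := by
    ext y
    simp only [f, MonoidHom.mem_ker, MonoidHom.comp_apply, Subgroup.coe_subtype,
      Subgroup.mem_subgroupOf]
    rw [QuotientGroup.mk'_apply, QuotientGroup.eq_one_iff]
  have hrange : f.range = Y.map π := by
    rw [MonoidHom.range_comp, Subgroup.range_subtype]
  have hcard1 : Nat.card ↥Y = Nat.card (Y ⧸ f.ker) * Nat.card f.ker :=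
    Subgroup.card_eq_card_quotient_mul_card_subgroup f.ker
  have hcard2 : Nat.card f.ker = Nat.card Z := by
    rw [hker]
    exact Nat.card_congr (Subgroup.subgroupOfEquivOfLe hZY).toEquiv
  have hcard3 : Nat.card (Y ⧸ f.ker) = Nat.card f.range :=
    Nat.card_congr (QuotientGroup.quotientKerEquivRange f).toEquiv
  have hcardN : Nat.card (Y.map π) = p := by
    have hZpos : 0 < Nat.card ↥Z := Nat.card_pos
    have : p * Nat.card ↥Z = Nat.card (Y.map π) * Nat.card ↥Z := by
      rw [← hYcard, hcard1, hcard2, hcard3, hrange]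
    exact (Nat.eq_of_mul_eq_mul_right hZpos this).symm
  haveI hNnorm : (Y.map π).Normal := hYnorm.map π (QuotientGroup.mk'_surjective Z)
  have hQp : IsPGroup p (G ⧸ Z) := hG.to_quotient Z
  have hle := le_center_of_card_p p hp hQp (Y.map π) hNnorm hcardN
  intro g y hy
  have hmem : π y ∈ Y.map π := Subgroup.mem_map_of_mem π hy
  have hcomm := Subgroup.mem_center_iff.mp (hle hmem) (π g)
  have hgoal : π (g * y * g⁻¹ * y⁻¹) = 1 → g * y * g⁻¹ * y⁻¹ ∈ Z := by
    intro h
    rw [QuotientGroup.mk'_apply, QuotientGroup.eq_one_iff] at h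
    exact h
  apply hgoal
  have : π (g * y * g⁻¹ * y⁻¹) = π g * π y * (π g)⁻¹ * (π y)⁻¹ := by
    simp [map_mul, map_inv]
  show π (g * y * g⁻¹ * y⁻¹) = 1
  rw [this, hcomm]
  group

theorem stmt15 (p : ℕ) (hp : p.Prime) {G : Type} [Group G] [Fintype G] (hG : IsPGroup p G)
    (χ ψ : G → ℂ) (hχ : IsIrrChar G χ) (hψ : IsIrrChar G ψ)
    (hdχ : χ 1 = (p : ℂ)) (hdψ : ψ 1 = (p : ℂ))
    (hker : ∀ g : G, χ g = χ 1 → ψ g = ψ 1 → g = 1)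
    (H : Subgroup G) (hHnorm : H.Normal) (hidx : H.index = p)
    (habel : ∀ a b : ↥H, a * b = b * a)
    (ξ τ : ↥H → ℂ) (hξ : IsLinChar ↥H ξ) (hτ : IsLinChar ↥H τ)
    (hχind : χ = ind H ξ) (hψind : ψ = ind H τ)
    (hZH : Subgroup.center G ≤ H)
    (hZχ : {g : G | ‖χ g‖ = ‖χ 1‖} = (Subgroup.center G : Set G))
    (hZψ : {g : G | ‖ψ g‖ = ‖ψ 1‖} = (Subgroup.center G : Set G))
    (Y : Subgroup G) (hYnorm : Y.Normal) (hYH : Y ≤ H)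
    (hZY : Subgroup.center G < Y)
    (hYchief : Nat.card ↥Y = p * Nat.card ↥(Subgroup.center G))
    (hinv : ∀ g : G, ∀ t : G, ∀ ht : t ∈ Y,
      ξ ⟨g * t * g⁻¹, hYH (hYnorm.conj_mem t ht g)⟩ *
        τ ⟨g * t * g⁻¹, hYH (hYnorm.conj_mem t ht g)⟩ =
      ξ ⟨t, hYH ht⟩ * τ ⟨t, hYH ht⟩) :
    ∃ τs : Fin p → ↥H → ℂ, (∀ j, IsLinChar ↥H (τs j)) ∧
      (∀ h : ↥H, ψ (h : G) = ∑ j, τs j h) ∧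
      Function.Injective (fun j => fun y : ↥Y => ξ ⟨(y : G), hYH y.2⟩ * τs j ⟨(y : G), hYH y.2⟩) ∧
      (∀ j, IsLinChar ↥Y (fun y : ↥Y => ξ ⟨(y : G), hYH y.2⟩ * τs j ⟨(y : G), hYH y.2⟩)) ∧
      ∀ y : G, ∀ hy : y ∈ Y,
        χ y * ψ y = (p : ℂ) * ∑ j, ξ ⟨y, hYH hy⟩ * τs j ⟨y, hYH hy⟩ := by
  haveI : Fact p.Prime := ⟨hp⟩
  haveI := hHnorm
  haveI : Fintype ↥H := Fintype.ofFinite _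
  -- monoid hom versions of the linear characters
  let ξm : ↥H →* ℂ :=
    { toFun := ξ, map_one' := hξ.2, map_mul' := fun a b => mul_of_isLinChar hξ a b }
  let τm : ↥H →* ℂ :=
    { toFun := τ, map_one' := hτ.2, map_mul' := fun a b => mul_of_isLinChar hτ a b }
  -- choose g₀ outside H
  have hp1 : 1 < p := hp.one_lt
  have hHtop : H ≠ ⊤ := by
    intro h
    rw [h, Subgroup.index_top] at hidx
    omega
  obtain ⟨g₀, hg₀⟩ : ∃ g : G, g ∉ H := by
    by_contra hc
    push_neg at hc
    exact hHtop ((Subgroup.eq_top_iff' H).mpr hc)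
  have hg₀Q : ((g₀ : G) : G ⧸ H) ≠ 1 := by
    rw [Ne, QuotientGroup.eq_one_iff]; exact hg₀
  have horder : orderOf ((g₀ : G) : G ⧸ H) = p := by
    have hdvd : orderOf ((g₀ : G) : G ⧸ H) ∣ p := by
      have h1 := orderOf_dvd_natCard ((g₀ : G) : G ⧸ H)
      rwa [show Nat.card (G ⧸ H) = p from hidx] at h1
    rcases hp.eq_one_or_self_of_dvd _ hdvd with h1 | h1
    · exact absurd (orderOf_eq_one_iff.mp h1) hg₀Q
    · exact h1
  have hpow : ∀ k : ℕ, g₀ ^ k ∈ H ↔ p ∣ k := by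
    intro k
    rw [show (g₀ ^ k ∈ H) ↔ (((g₀ ^ k : G) : G ⧸ H) = 1) from (QuotientGroup.eq_one_iff _).symm]
    rw [show ((g₀ ^ k : G) : G ⧸ H) = ((g₀ : G) : G ⧸ H) ^ k from rfl]
    rw [← orderOf_dvd_iff_pow_eq_one, horder]
  -- coset decomposition
  have hcardG : Nat.card G = p * Nat.card ↥H := by
    rw [← hidx]; exact (Subgroup.index_mul_card H).symm
  set e : Fin p × ↥H → G := fun jh => g₀ ^ (jh.1 : ℕ) * (jh.2 : G) with he
  have hebij : Function.Bijective e := by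
    rw [Nat.bijective_iff_injective_and_card]
    constructor
    · have key : ∀ (i j : Fin p) (h₁ h₂ : ↥H), (i : ℕ) ≤ (j : ℕ) →
          g₀ ^ (i : ℕ) * (h₁ : G) = g₀ ^ (j : ℕ) * (h₂ : G) → (j : ℕ) ≤ (i : ℕ) := by
        intro i j h₁ h₂ hle heq
        have h5 : g₀ ^ (j : ℕ) = g₀ ^ (i : ℕ) * ((h₁ : G) * (h₂ : G)⁻¹) := by
          rw [show g₀ ^ (i:ℕ) * ((h₁ : G) * (h₂ : G)⁻¹) = (g₀ ^ (i:ℕ) * (h₁:G)) * (h₂:G)⁻¹ by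
            group]
          rw [heq]; group
        have h6a : g₀ ^ ((j : ℕ) - (i : ℕ)) * g₀ ^ (i : ℕ) = g₀ ^ (j : ℕ) := by
          rw [← pow_add, Nat.sub_add_cancel hle]
        have h6 : g₀ ^ ((j : ℕ) - (i : ℕ)) =
            g₀ ^ (i : ℕ) * ((h₁ : G) * (h₂ : G)⁻¹) * (g₀ ^ (i : ℕ))⁻¹ := by
          rw [← h5, ← h6a]; group
        have h3 : g₀ ^ ((j : ℕ) - (i : ℕ)) ∈ H := by
          rw [h6]
          exact hHnorm.conj_mem _ (H.mul_mem h₁.2 (H.inv_mem h₂.2)) _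
        have h7 : p ∣ (j : ℕ) - (i : ℕ) := (hpow _).mp h3
        have h8 : (j : ℕ) < p := j.isLt
        have h9 := Nat.eq_zero_of_dvd_of_lt h7 (by omega)
        omega
      rintro ⟨i, h₁⟩ ⟨j, h₂⟩ hij
      simp only [he] at hij
      have hij' : g₀ ^ (i : ℕ) * (h₁ : G) = g₀ ^ (j : ℕ) * (h₂ : G) := hij
      have hijeq : (i : ℕ) = (j : ℕ) := by
        rcases le_total (i : ℕ) (j : ℕ) with hle | hle
        · exact le_antisymm hle (key i j h₁ h₂ hle hij')
        · exact (le_antisymm hle (key j i h₂ h₁ hle hij'.symm)).symm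
      have hi : i = j := Fin.ext hijeq
      subst hi
      have : (h₁ : G) = (h₂ : G) := mul_left_cancel hij'
      exact Prod.ext rfl (Subtype.ext this)
    · rw [Nat.card_prod, Nat.card_eq_fintype_card (α := Fin p), Fintype.card_fin, ← hcardG]
  -- conjugation homomorphisms
  have hconjmem : ∀ (k : ℕ) (h : ↥H), g₀ ^ k * (h : G) * (g₀ ^ k)⁻¹ ∈ H :=
    fun k h => hHnorm.conj_mem _ h.2 _
  let cHom : ℕ → (↥H →* ↥H) := fun k => MonoidHom.mk'
    (fun h => ⟨g₀ ^ k * (h : G) * (g₀ ^ k)⁻¹, hconjmem k h⟩)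
    (by
      intro a b
      apply Subtype.ext
      show g₀ ^ k * ((a : G) * (b : G)) * (g₀ ^ k)⁻¹ =
        (g₀ ^ k * (a : G) * (g₀ ^ k)⁻¹) * (g₀ ^ k * (b : G) * (g₀ ^ k)⁻¹)
      group)
  -- the induced-character restriction formula
  have hcne : (Fintype.card ↥H : ℂ) ≠ 0 := by
    exact_mod_cast Fintype.card_ne_zero
  have hind : ∀ (m : ↥H →* ℂ) (h : ↥H),
      ind H (⇑m) ((h : G)) = ∑ j : Fin p, m (cHom (j : ℕ) h) := by
    intro m h
    classical
    unfold ind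
    have hD : ∀ (D : G → ℂ), (∀ jh : Fin p × ↥H, D (e jh) = m (cHom ((jh.1 : Fin p) : ℕ) h)) →
        (Nat.card ↥H : ℂ)⁻¹ * ∑ x : G, D x = ∑ j : Fin p, m (cHom (j : ℕ) h) := by
      intro D hDval
      rw [← Fintype.sum_bijective e hebij (fun jh => D (e jh)) D (fun _ => rfl)]
      rw [Finset.sum_congr rfl (fun jh _ => hDval jh)]
      rw [Fintype.sum_prod_type]
      simp only [Finset.sum_const, Finset.card_univ, nsmul_eq_mul]
      rw [← Finset.mul_sum, ← mul_assoc, Nat.card_eq_fintype_card,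
        inv_mul_cancel₀ hcne, one_mul]
    apply hD
    rintro ⟨j, h₀⟩
    have hcomm : (h₀ : G) * (h : G) = (h : G) * (h₀ : G) :=
      congrArg Subtype.val (habel h₀ h)
    have hval : (e (j, h₀)) * (h : G) * (e (j, h₀))⁻¹ =
        g₀ ^ (j : ℕ) * (h : G) * (g₀ ^ (j : ℕ))⁻¹ := by
      show (g₀ ^ (j : ℕ) * (h₀ : G)) * (h : G) * (g₀ ^ (j : ℕ) * (h₀ : G))⁻¹ = _
      rw [mul_inv_rev]
      calc g₀ ^ (j:ℕ) * (h₀:G) * (h:G) * ((h₀:G)⁻¹ * (g₀ ^ (j:ℕ))⁻¹)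
          = g₀ ^ (j:ℕ) * ((h₀:G) * (h:G)) * (h₀:G)⁻¹ * (g₀ ^ (j:ℕ))⁻¹ := by group
        _ = g₀ ^ (j:ℕ) * ((h:G) * (h₀:G)) * (h₀:G)⁻¹ * (g₀ ^ (j:ℕ))⁻¹ := by rw [hcomm]
        _ = g₀ ^ (j:ℕ) * (h:G) * (g₀ ^ (j:ℕ))⁻¹ := by group
    have hx : (e (j, h₀)) * (h : G) * (e (j, h₀))⁻¹ ∈ H := by
      rw [hval]; exact hconjmem _ _
    show (if hc : (e (j, h₀)) * (h : G) * (e (j, h₀))⁻¹ ∈ H then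
        m ⟨(e (j, h₀)) * (h : G) * (e (j, h₀))⁻¹, hc⟩ else 0) = m (cHom (j : ℕ) h)
    rw [dif_pos hx]
    exact congrArg m (Subtype.ext hval)
  -- centrality of commutators with Y
  have hcent : ∀ g y : G, y ∈ Y → g * y * g⁻¹ * y⁻¹ ∈ Subgroup.center G :=
    commutator_mem_center p hp hG Y hYnorm hZY.le hYchief
  -- conjugation powers formula
  have hconj_pow : ∀ (y : G), y ∈ Y → ∀ k : ℕ,
      g₀ ^ k * y * (g₀ ^ k)⁻¹ = y * (g₀ * y * g₀⁻¹ * y⁻¹) ^ k := by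
    intro y hy
    have hc := hcent g₀ y hy
    have hcc := Subgroup.mem_center_iff.mp hc
    set c := g₀ * y * g₀⁻¹ * y⁻¹ with hcdef
    intro k
    induction k with
    | zero => simp
    | succ n ih =>
      have h1 : g₀ ^ (n + 1) * y * (g₀ ^ (n + 1))⁻¹ =
          g₀ * (g₀ ^ n * y * (g₀ ^ n)⁻¹) * g₀⁻¹ := by
        rw [pow_succ']; group
      rw [h1, ih]
      have hcn := Subgroup.mem_center_iff.mp ((Subgroup.center G).pow_mem hc n)
      have h2 : g₀ * y * g₀⁻¹ = y * c := by
        calc g₀ * y * g₀⁻¹ = c * y := by rw [hcdef]; group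
          _ = y * c := (hcc y).symm
      calc g₀ * (y * c ^ n) * g₀⁻¹
          = g₀ * y * (c ^ n * g₀⁻¹) := by group
        _ = g₀ * y * (g₀⁻¹ * c ^ n) := by rw [← hcn g₀⁻¹]
        _ = (g₀ * y * g₀⁻¹) * c ^ n := by group
        _ = y * c * c ^ n := by rw [h2]
        _ = y * c ^ (n + 1) := by rw [mul_assoc, ← pow_succ']
  -- commutator has order dividing p
  have hcp : ∀ y : G, y ∈ Y → (g₀ * y * g₀⁻¹ * y⁻¹) ^ p = 1 := by
    intro y hy
    have h1 := hconj_pow y hy p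
    have hgp : g₀ ^ p ∈ H := (hpow p).mpr dvd_rfl
    have hc2 : g₀ ^ p * y = y * g₀ ^ p :=
      congrArg Subtype.val (habel ⟨g₀ ^ p, hgp⟩ ⟨y, hYH hy⟩)
    have h2 : g₀ ^ p * y * (g₀ ^ p)⁻¹ = y := by rw [hc2]; group
    rw [h2] at h1
    exact (left_eq_mul.mp h1)
  -- key evaluation
  have hkey : ∀ (m : ↥H →* ℂ) (y : G) (hy : y ∈ Y) (k : ℕ),
      m (cHom k ⟨y, hYH hy⟩) = m ⟨y, hYH hy⟩ *
        (m ⟨g₀ * y * g₀⁻¹ * y⁻¹, hZH (hcent g₀ y hy)⟩) ^ k := by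
    intro m y hy k
    have h1 : cHom k ⟨y, hYH hy⟩ =
        ⟨y, hYH hy⟩ * (⟨g₀ * y * g₀⁻¹ * y⁻¹, hZH (hcent g₀ y hy)⟩ : ↥H) ^ k := by
      apply Subtype.ext
      show g₀ ^ k * y * (g₀ ^ k)⁻¹ = _
      rw [hconj_pow y hy k]
      push_cast
      rfl
    rw [h1, map_mul, map_pow]
  -- the product of the commutator values is 1
  have hξτ1 : ∀ (y : G) (hy : y ∈ Y),
      ξm ⟨g₀ * y * g₀⁻¹ * y⁻¹, hZH (hcent g₀ y hy)⟩ *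
        τm ⟨g₀ * y * g₀⁻¹ * y⁻¹, hZH (hcent g₀ y hy)⟩ = 1 := by
    intro y hy
    have h1 : ξm ⟨g₀ * y * g₀⁻¹, hYH (hYnorm.conj_mem y hy g₀)⟩ *
        τm ⟨g₀ * y * g₀⁻¹, hYH (hYnorm.conj_mem y hy g₀)⟩ =
        ξm ⟨y, hYH hy⟩ * τm ⟨y, hYH hy⟩ := hinv g₀ y hy
    have h2 : (⟨g₀ * y * g₀⁻¹, hYH (hYnorm.conj_mem y hy g₀)⟩ : ↥H) =
        ⟨y, hYH hy⟩ * ⟨g₀ * y * g₀⁻¹ * y⁻¹, hZH (hcent g₀ y hy)⟩ := by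
      apply Subtype.ext
      show g₀ * y * g₀⁻¹ = y * (g₀ * y * g₀⁻¹ * y⁻¹)
      have h3 := hconj_pow y hy 1
      simpa using h3
    rw [h2, map_mul, map_mul] at h1
    have h4 := hom_ne_zero ξm ⟨y, hYH hy⟩
    have h5 := hom_ne_zero τm ⟨y, hYH hy⟩
    apply mul_left_cancel₀ (mul_ne_zero h4 h5)
    rw [mul_one]
    calc ξm ⟨y, hYH hy⟩ * τm ⟨y, hYH hy⟩ *
          (ξm ⟨g₀ * y * g₀⁻¹ * y⁻¹, hZH (hcent g₀ y hy)⟩ *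
            τm ⟨g₀ * y * g₀⁻¹ * y⁻¹, hZH (hcent g₀ y hy)⟩)
        = ξm ⟨y, hYH hy⟩ * ξm ⟨g₀ * y * g₀⁻¹ * y⁻¹, hZH (hcent g₀ y hy)⟩ *
          (τm ⟨y, hYH hy⟩ * τm ⟨g₀ * y * g₀⁻¹ * y⁻¹, hZH (hcent g₀ y hy)⟩) := by ring
      _ = ξm ⟨y, hYH hy⟩ * τm ⟨y, hYH hy⟩ := h1
  -- commutator value powers are p-th roots of unity
  have hβp : ∀ (m : ↥H →* ℂ) (y : G) (hy : y ∈ Y),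
      (m ⟨g₀ * y * g₀⁻¹ * y⁻¹, hZH (hcent g₀ y hy)⟩) ^ p = 1 := by
    intro m y hy
    rw [← map_pow]
    have h1 : (⟨g₀ * y * g₀⁻¹ * y⁻¹, hZH (hcent g₀ y hy)⟩ : ↥H) ^ p = 1 := by
      apply Subtype.ext
      push_cast
      exact hcp y hy
    rw [h1, map_one]
  -- restriction formulas
  have hχY : ∀ (y : G) (hy : y ∈ Y), χ y = ξm ⟨y, hYH hy⟩ *
      ∑ i : Fin p, (ξm ⟨g₀ * y * g₀⁻¹ * y⁻¹, hZH (hcent g₀ y hy)⟩) ^ (i : ℕ) := by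
    intro y hy
    have h1 : χ y = ∑ j : Fin p, ξm (cHom (j : ℕ) ⟨y, hYH hy⟩) := by
      rw [hχind]; exact hind ξm ⟨y, hYH hy⟩
    have h2 : ∑ j : Fin p, ξm (cHom (j : ℕ) ⟨y, hYH hy⟩) =
        ∑ j : Fin p, ξm ⟨y, hYH hy⟩ *
          (ξm ⟨g₀ * y * g₀⁻¹ * y⁻¹, hZH (hcent g₀ y hy)⟩) ^ (j : ℕ) :=
      Finset.sum_congr rfl (fun j _ => hkey ξm y hy (j : ℕ))
    rw [h1, h2, ← Finset.mul_sum]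
  have hψY : ∀ (y : G) (hy : y ∈ Y), ψ y = τm ⟨y, hYH hy⟩ *
      ∑ i : Fin p, (τm ⟨g₀ * y * g₀⁻¹ * y⁻¹, hZH (hcent g₀ y hy)⟩) ^ (i : ℕ) := by
    intro y hy
    have h1 : ψ y = ∑ j : Fin p, τm (cHom (j : ℕ) ⟨y, hYH hy⟩) := by
      rw [hψind]; exact hind τm ⟨y, hYH hy⟩
    have h2 : ∑ j : Fin p, τm (cHom (j : ℕ) ⟨y, hYH hy⟩) =
        ∑ j : Fin p, τm ⟨y, hYH hy⟩ *
          (τm ⟨g₀ * y * g₀⁻¹ * y⁻¹, hZH (hcent g₀ y hy)⟩) ^ (j : ℕ) :=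
      Finset.sum_congr rfl (fun j _ => hkey τm y hy (j : ℕ))
    rw [h1, h2, ← Finset.mul_sum]
  -- the answer
  refine ⟨fun j => ⇑(τm.comp (cHom (j : ℕ))), ?_, ?_, ?_, ?_, ?_⟩
  · intro j
    exact isLinChar_of_monoidHom (τm.comp (cHom (j : ℕ)))
  · intro h
    rw [hψind]
    exact hind τm h
  · intro i j hij
    by_contra hne
    have hβ1 : ∀ (y : G) (hy : y ∈ Y),
        τm ⟨g₀ * y * g₀⁻¹ * y⁻¹, hZH (hcent g₀ y hy)⟩ = 1 := by
      intro y hy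
      have h1 : ξm ⟨y, hYH hy⟩ * τm (cHom (i : ℕ) ⟨y, hYH hy⟩) =
          ξm ⟨y, hYH hy⟩ * τm (cHom (j : ℕ) ⟨y, hYH hy⟩) := congrFun hij ⟨y, hy⟩
      rw [hkey τm y hy (i : ℕ), hkey τm y hy (j : ℕ)] at h1
      have h4 := hom_ne_zero ξm ⟨y, hYH hy⟩
      have h5 := hom_ne_zero τm ⟨y, hYH hy⟩
      have hβeq : (τm ⟨g₀ * y * g₀⁻¹ * y⁻¹, hZH (hcent g₀ y hy)⟩) ^ (i : ℕ) =
          (τm ⟨g₀ * y * g₀⁻¹ * y⁻¹, hZH (hcent g₀ y hy)⟩) ^ (j : ℕ) := by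
        exact mul_left_cancel₀ h5 (mul_left_cancel₀ h4 h1)
      set β := τm ⟨g₀ * y * g₀⁻¹ * y⁻¹, hZH (hcent g₀ y hy)⟩ with hβdef
      have hne0 : β ≠ 0 := hom_ne_zero τm _
      have hd : ∃ d : ℕ, 0 < d ∧ d < p ∧ β ^ d = 1 := by
        have hij2 : (i : ℕ) ≠ (j : ℕ) := fun h => hne (Fin.ext h)
        rcases lt_or_gt_of_ne hij2 with hlt | hlt
        · refine ⟨(j : ℕ) - (i : ℕ), by omega, by have := j.isLt; omega, ?_⟩
          apply mul_left_cancel₀ (pow_ne_zero (i : ℕ) hne0)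
          rw [mul_one, ← pow_add, Nat.add_sub_cancel' hlt.le]
          exact hβeq.symm
        · refine ⟨(i : ℕ) - (j : ℕ), by omega, by have := i.isLt; omega, ?_⟩
          apply mul_left_cancel₀ (pow_ne_zero (j : ℕ) hne0)
          rw [mul_one, ← pow_add, Nat.add_sub_cancel' hlt.le]
          exact hβeq
      obtain ⟨d, hd0, hdp, hβd⟩ := hd
      have h5' : orderOf β ∣ d := orderOf_dvd_of_pow_eq_one hβd
      have h6 : orderOf β ∣ p := orderOf_dvd_of_pow_eq_one (hβp τm y hy)
      have h7 : ¬ p ∣ d := fun hdvd => by have := Nat.le_of_dvd hd0 hdvd; omega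
      have h8 : Nat.gcd d p = 1 := Nat.Coprime.gcd_eq_one ((hp.coprime_iff_not_dvd.mpr h7).symm)
      have h9 : orderOf β ∣ 1 := h8 ▸ Nat.dvd_gcd h5' h6
      exact orderOf_eq_one_iff.mp (Nat.dvd_one.mp h9)
    obtain ⟨y, hyY, hyZ⟩ := SetLike.exists_of_lt hZY
    have hξc1 : ξm ⟨g₀ * y * g₀⁻¹ * y⁻¹, hZH (hcent g₀ y hyY)⟩ = 1 := by
      have h1 := hξτ1 y hyY
      rw [hβ1 y hyY, mul_one] at h1
      exact h1
    have hχy : χ y = (p : ℂ) * ξm ⟨y, hYH hyY⟩ := by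
      rw [hχY y hyY, hξc1]
      simp
      ring
    have habs : ‖χ y‖ = ‖χ 1‖ := by
      rw [hχy, hdχ, norm_mul, hom_abs_one ξm, mul_one, Complex.norm_natCast]
    have hyZ' : y ∈ Subgroup.center G := by
      have h1 : y ∈ {g : G | ‖χ g‖ = ‖χ 1‖} := habs
      rw [hZχ] at h1
      exact h1
    exact hyZ hyZ'
  · intro j
    exact isLinChar_of_monoidHom
      ((ξm.comp (Subgroup.inclusion hYH)) * ((τm.comp (cHom (j : ℕ))).comp (Subgroup.inclusion hYH)))
  · intro y hy
    have hxp := hχY y hy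
    have hpp := hψY y hy
    have hab := hξτ1 y hy
    have hgeo := geom_aux p (ξm ⟨g₀ * y * g₀⁻¹ * y⁻¹, hZH (hcent g₀ y hy)⟩)
      (τm ⟨g₀ * y * g₀⁻¹ * y⁻¹, hZH (hcent g₀ y hy)⟩) hab (hβp τm y hy)
    calc χ y * ψ y
        = (ξm ⟨y, hYH hy⟩ * τm ⟨y, hYH hy⟩) *
          ((∑ i : Fin p, (ξm ⟨g₀ * y * g₀⁻¹ * y⁻¹, hZH (hcent g₀ y hy)⟩) ^ (i : ℕ)) *
           (∑ i : Fin p, (τm ⟨g₀ * y * g₀⁻¹ * y⁻¹, hZH (hcent g₀ y hy)⟩) ^ (i : ℕ))) := by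
          rw [hxp, hpp]; ring
      _ = (ξm ⟨y, hYH hy⟩ * τm ⟨y, hYH hy⟩) *
          ((p : ℂ) * ∑ i : Fin p, (τm ⟨g₀ * y * g₀⁻¹ * y⁻¹, hZH (hcent g₀ y hy)⟩) ^ (i : ℕ)) := by
          rw [hgeo]
      _ = (p : ℂ) * ∑ i : Fin p, (ξm ⟨y, hYH hy⟩ * τm ⟨y, hYH hy⟩) *
            (τm ⟨g₀ * y * g₀⁻¹ * y⁻¹, hZH (hcent g₀ y hy)⟩) ^ (i : ℕ) := by
          rw [← Finset.mul_sum]; ring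
      _ = (p : ℂ) * ∑ i : Fin p, ξ ⟨y, hYH hy⟩ *
            (fun j : Fin p => ⇑(τm.comp (cHom (j : ℕ)))) i ⟨y, hYH hy⟩ := by
          congr 1
          apply Finset.sum_congr rfl
          intro i _
          show _ = ξ ⟨y, hYH hy⟩ * τm (cHom (i : ℕ) ⟨y, hYH hy⟩)
          rw [hkey τm y hy (i : ℕ)]
          show _ = ξm ⟨y, hYH hy⟩ * (τm ⟨y, hYH hy⟩ *
            (τm ⟨g₀ * y * g₀⁻¹ * y⁻¹, hZH (hcent g₀ y hy)⟩) ^ (i : ℕ))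
          ring
end
end
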